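/- Let α > 1 and β > 1 be real constants, and for L > 0 define g(L) = inf_{n ∈ ℕ, n ≥ 1} α^n β^{L/2^n}. Then g(L) is not O((L/log L)^{log₂ α}) as L → ∞; that is, there is no constant M such that g(L) ≤ M (L/log L)^{log₂ α} for all sufficiently large L. -/

import Mathlib

open Real


/-- For `α, β > 1`, the quantity `g(L) = inf_{n ≥ 1} α^n β^{L/2^n}` is not
`O((L/log L)^{log₂ α})` as `L → ∞`. -/
theorem stmt9 (α β : ℝ) (hα : 1 < α) (hβ : 1 < β) :
    ¬ ∃ M : ℝ, ∀ᶠ L : ℝ in Filter.atTop,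
        (⨅ n : ℕ+, α ^ (n : ℕ) * β ^ (L / 2 ^ (n : ℕ))) ≤
          M * (L / Real.log L) ^ Real.logb 2 α := by

  set γ := Real.logb 2 α with hγdef
  have hγ : 0 < γ := Real.logb_pos one_lt_two hα
  have hb : 0 < Real.log β := Real.log_pos hβ
  set b := Real.log β with hbdef
  set k : ℕ := ⌈γ⌉₊ with hkdef
  have hk0 : 0 < k := Nat.ceil_pos.mpr hγ
  have hkR : (0:ℝ) < (k:ℝ) := Nat.cast_pos.mpr hk0
  have hγk : γ ≤ (k:ℝ) := Nat.le_ceil γ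
  set c : ℝ := min 1 ((b/k)^k) with hcdef
  have hc : 0 < c := lt_min one_pos (pow_pos (div_pos hb hkR) k)
  have key : ∀ L : ℝ, 0 < L → ∀ n : ℕ+,
      c * L ^ γ ≤ α ^ (n:ℕ) * β ^ (L / 2 ^ (n:ℕ)) := by
    intro L hL n
    set x : ℝ := 2 ^ (n:ℕ) with hxdef
    have hx : (0:ℝ) < x := by positivity
    have hαx : α ^ (n:ℕ) = x ^ γ := by
      have h2 : (2:ℝ) ^ γ = α := Real.rpow_logb two_pos (by norm_num) (lt_trans one_pos hα)
      rw [hxdef, ← h2, ← Real.rpow_natCast ((2:ℝ)^γ) (n:ℕ), ← Real.rpow_mul (by norm_num),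
        mul_comm, Real.rpow_mul (by norm_num), Real.rpow_natCast]
    set s : ℝ := L / x with hsdef
    have hxs : x * s = L := by rw [hsdef, mul_div_assoc']; exact mul_div_cancel_left₀ L hx.ne'
    rcases le_or_gt L x with h | h
    · have h1 : L ^ γ ≤ x ^ γ := Real.rpow_le_rpow hL.le h hγ.le
      have h2 : (1:ℝ) ≤ β ^ s := Real.one_le_rpow hβ.le (by positivity)
      calc c * L ^ γ ≤ 1 * (x ^ γ) :=
            mul_le_mul (min_le_left _ _) h1 (by positivity) one_pos.le
        _ = x ^ γ := one_mul _
        _ ≤ x ^ γ * β ^ s := le_mul_of_one_le_right (by positivity) h2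
        _ = α ^ (n:ℕ) * β ^ s := by rw [hαx]
    · have hs1 : 1 < s := (one_lt_div hx).mpr h
      have hβs : (b/k)^k * s ^ γ ≤ β ^ s := by
        have e1 : β ^ s = Real.exp (b * s) := by
          rw [Real.rpow_def_of_pos (lt_trans one_pos hβ)]
        have e2 : Real.exp (b * s) = (Real.exp (b * s / k)) ^ k := by
          rw [← Real.exp_nat_mul]
          congr 1
          field_simp
        have e3 : b * s / k ≤ Real.exp (b * s / k) :=
          le_trans (le_add_of_nonneg_right one_pos.le) (Real.add_one_le_exp _)
        have e4 : (b*s/k)^k ≤ (Real.exp (b*s/k))^k :=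
          pow_le_pow_left₀ (by positivity) e3 k
        have e5 : (b*s/k)^k = (b/k)^k * s^k := by
          have : b*s/k = (b/k)*s := by ring
          rw [this, mul_pow]
        have e6 : s ^ γ ≤ s ^ (k:ℕ) := by
          rw [← Real.rpow_natCast s k]
          exact Real.rpow_le_rpow_of_exponent_le hs1.le hγk
        calc (b/k)^k * s ^ γ ≤ (b/k)^k * s^(k:ℕ) :=
              mul_le_mul_of_nonneg_left e6 (by positivity)
          _ = (b*s/k)^k := e5.symm
          _ ≤ (Real.exp (b*s/k))^k := e4
          _ = β ^ s := by rw [← e2, ← e1]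
      calc c * L ^ γ ≤ (b/k)^k * L ^ γ :=
            mul_le_mul_of_nonneg_right (min_le_right _ _) (Real.rpow_nonneg hL.le _)
        _ = (b/k)^k * (x ^ γ * s ^ γ) := by
            rw [← Real.mul_rpow hx.le (by positivity), hxs]
        _ = x ^ γ * ((b/k)^k * s ^ γ) := by ring
        _ ≤ x ^ γ * β ^ s := mul_le_mul_of_nonneg_left hβs (by positivity)
        _ = α ^ (n:ℕ) * β ^ s := by rw [hαx]
  rintro ⟨M, hM⟩
  obtain ⟨a, ha⟩ := Filter.eventually_atTop.mp hM
  set X : ℝ := (|M|/c + 1) ^ (γ⁻¹) with hXdef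
  have hXbase : (0:ℝ) < |M|/c + 1 := by positivity
  set T : ℝ := max (max a 1) X with hTdef
  have hT1 : (1:ℝ) ≤ T := le_trans (le_max_right a 1) (le_max_left _ _)
  have hTa : a ≤ T := le_trans (le_max_left a 1) (le_max_left _ _)
  have hTX : X ≤ T := le_max_right _ _
  have hT0 : (0:ℝ) < T := lt_of_lt_of_le one_pos hT1
  have hTγ : |M| + c ≤ c * T ^ γ := by
    have hXγ : X ^ γ = |M|/c + 1 := by
      rw [hXdef, ← Real.rpow_mul hXbase.le, inv_mul_cancel₀ hγ.ne', Real.rpow_one]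
    have h1 : X ^ γ ≤ T ^ γ :=
      Real.rpow_le_rpow (Real.rpow_nonneg hXbase.le _) hTX hγ.le
    have h2 : |M|/c + 1 ≤ T ^ γ := hXγ ▸ h1
    calc |M| + c = c * (|M|/c + 1) := by field_simp
      _ ≤ c * T ^ γ := mul_le_mul_of_nonneg_left h2 hc.le
  set L : ℝ := Real.exp T with hLdef
  have hL0 : 0 < L := Real.exp_pos T
  have hlog : Real.log L = T := Real.log_exp T
  have hLa : a ≤ L := by
    have := Real.add_one_le_exp T
    linarith [hTa]
  have h1 := ha L hLa
  have h2 : c * L ^ γ ≤ ⨅ n : ℕ+, α ^ (n:ℕ) * β ^ (L / 2 ^ (n:ℕ)) :=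
    le_ciInf (fun n => key L hL0 n)
  rw [hlog] at h1
  have h3 : c * L ^ γ ≤ M * (L / T) ^ γ := h2.trans h1
  have h4 : M * (L / T) ^ γ ≤ |M| * (L ^ γ / T ^ γ) := by
    rw [Real.div_rpow hL0.le hT0.le]
    exact mul_le_mul_of_nonneg_right (le_abs_self M) (by positivity)
  have hPL : 0 < L ^ γ := Real.rpow_pos_of_pos hL0 γ
  have hPT : 0 < T ^ γ := Real.rpow_pos_of_pos hT0 γ
  have h5 : c * L ^ γ * T ^ γ ≤ |M| * L ^ γ := by
    have := h3.trans h4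
    calc c * L ^ γ * T ^ γ ≤ (|M| * (L ^ γ / T ^ γ)) * T ^ γ :=
          mul_le_mul_of_nonneg_right this hPT.le
      _ = |M| * L ^ γ := by field_simp
  nlinarith [mul_pos hc hPL, mul_le_mul_of_nonneg_right hTγ hPL.le]
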